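/- The twisted representation R of the loop braid group respects the mixed relations VII and VIII: for each 1 ≤ i ≤ n−2, M_i(a∘(τ_i∘τ_{i+1})) · P_{i+1} · P_i = P_{i+1} · P_i · M_{i+1}(a) and P_i · M_{i+1}(a∘τ_i) · M_i(a) = M_{i+1}(a∘(τ_{i+1}∘τ_i)) · M_i(a∘τ_{i+1}) · P_{i+1} as n×n matrices over A. -/

import Mathlib

/-- 1-based access to the tuple `a = (a_1, …, a_n)`: `aval n a j = a_j` for
`1 ≤ j ≤ n` (junk value `0` out of range). -/
def aval {A : Type*} [CommRing A] (n : ℕ) (a : Fin n → A) (j : ℕ) : A :=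
  if h : j - 1 < n then a ⟨j - 1, h⟩ else 0

/-- The twisted Burau matrix `M_i(a) = R(σ_i)` (`i` 1-based): it agrees with the
identity matrix except that its `2×2` submatrix in rows and columns `i, i+1` equals
`[[1−a_{i+1}, a_i], [1, 0]]`. -/
def twistM (A : Type*) [CommRing A] (n : ℕ) (a : Fin n → A) (i : ℕ) :
    Matrix (Fin n) (Fin n) A :=
  Matrix.of fun k l =>
    if (k : ℕ) + 1 = i ∧ (l : ℕ) + 1 = i then 1 - aval n a (i + 1)
    else if (k : ℕ) + 1 = i ∧ (l : ℕ) = i then aval n a i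
    else if (k : ℕ) = i ∧ (l : ℕ) + 1 = i then 1
    else if (k : ℕ) = i ∧ (l : ℕ) = i then 0
    else if k = l then 1 else 0

/-- The matrix `N_i(a) = R̄(σ_i)` (`i` 1-based): it agrees with the identity matrix
except that its `2×2` submatrix in rows and columns `i, i+1` equals
`[[0, a_i], [1, 1−a_i]]`. -/
def twistN (A : Type*) [CommRing A] (n : ℕ) (a : Fin n → A) (i : ℕ) :
    Matrix (Fin n) (Fin n) A :=
  Matrix.of fun k l =>
    if (k : ℕ) + 1 = i ∧ (l : ℕ) + 1 = i then 0
    else if (k : ℕ) + 1 = i ∧ (l : ℕ) = i then aval n a i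
    else if (k : ℕ) = i ∧ (l : ℕ) + 1 = i then 1
    else if (k : ℕ) = i ∧ (l : ℕ) = i then 1 - aval n a i
    else if k = l then 1 else 0

/-- The `n×n` permutation matrix `P_i` (`i` 1-based): it agrees with the identity
matrix except that its `2×2` submatrix in rows and columns `i, i+1` equals
`[[0, 1], [1, 0]]`. -/
def permM (A : Type*) [CommRing A] (n : ℕ) (i : ℕ) : Matrix (Fin n) (Fin n) A :=
  Matrix.of fun k l =>
    if (k : ℕ) + 1 = i ∧ (l : ℕ) + 1 = i then 0
    else if (k : ℕ) + 1 = i ∧ (l : ℕ) = i then 1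
    else if (k : ℕ) = i ∧ (l : ℕ) + 1 = i then 1
    else if (k : ℕ) = i ∧ (l : ℕ) = i then 0
    else if k = l then 1 else 0

/-- The transposition `τ_j` of `{1, …, n}` swapping `j` and `j+1` (1-based), as a
permutation of `Fin n` (junk value `1` out of range). -/
def tau (n j : ℕ) : Equiv.Perm (Fin n) :=
  if h : 1 ≤ j ∧ j < n then Equiv.swap ⟨j - 1, by omega⟩ ⟨j, h.2⟩ else 1

lemma twistM_eq (A : Type*) [CommRing A] (n : ℕ) (b : Fin n → A) (j : ℕ)
    (P Q : Fin n) (hP : (P : ℕ) + 1 = j) (hQ : (Q : ℕ) = j) :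
    twistM A n b j = 1 + (-(aval n b (j+1))) • Matrix.single P P (1:A)
      + (aval n b j) • Matrix.single P Q (1:A)
      + Matrix.single Q P (1:A)
      + (-1 : A) • Matrix.single Q Q (1:A) := by
  ext k l
  simp only [twistM, Matrix.of_apply, Matrix.add_apply, Matrix.smul_apply,
    Matrix.one_apply, Matrix.single, Fin.ext_iff, smul_eq_mul]
  have hPQ : (P:ℕ) ≠ (Q:ℕ) := by omega
  split_ifs <;> first | omega | ring

lemma permM_eq (A : Type*) [CommRing A] (n : ℕ) (j : ℕ)
    (P Q : Fin n) (hP : (P : ℕ) + 1 = j) (hQ : (Q : ℕ) = j) :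
    permM A n j = 1 + (-1 : A) • Matrix.single P P (1:A)
      + Matrix.single P Q (1:A)
      + Matrix.single Q P (1:A)
      + (-1 : A) • Matrix.single Q Q (1:A) := by
  ext k l
  simp only [permM, Matrix.of_apply, Matrix.add_apply, Matrix.smul_apply,
    Matrix.one_apply, Matrix.single, Fin.ext_iff, smul_eq_mul]
  have hPQ : (P:ℕ) ≠ (Q:ℕ) := by omega
  split_ifs <;> first | omega | ring


/-- The twisted representation `R` of the loop braid group respects the mixed relations
VII and VIII: for each `1 ≤ i ≤ n−2`,
`M_i(a∘(τ_i∘τ_{i+1})) · P_{i+1} · P_i = P_{i+1} · P_i · M_{i+1}(a)` and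
`P_i · M_{i+1}(a∘τ_i) · M_i(a) = M_{i+1}(a∘(τ_{i+1}∘τ_i)) · M_i(a∘τ_{i+1}) · P_{i+1}`
as `n×n` matrices over `A`. -/
theorem statement16 (A : Type*) [CommRing A] (n : ℕ) (hn : 3 ≤ n) (a : Fin n → A)
    (i : ℕ) (hi1 : 1 ≤ i) (hi2 : i ≤ n - 2) :
    (twistM A n (a ∘ (⇑(tau n i) ∘ ⇑(tau n (i + 1)))) i * permM A n (i + 1) *
        permM A n i =
      permM A n (i + 1) * permM A n i * twistM A n a (i + 1)) ∧
    (permM A n i * twistM A n (a ∘ ⇑(tau n i)) (i + 1) * twistM A n a i =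
      twistM A n (a ∘ (⇑(tau n (i + 1)) ∘ ⇑(tau n i))) (i + 1) *
        twistM A n (a ∘ ⇑(tau n (i + 1))) i * permM A n (i + 1)) := by
  have hin : i < n := by omega
  have hin1 : i + 1 < n := by omega
  set P : Fin n := ⟨i - 1, by omega⟩ with hPdef
  set Q : Fin n := ⟨i, hin⟩ with hQdef
  set R : Fin n := ⟨i + 1, hin1⟩ with hRdef
  have hPQ : P ≠ Q := Fin.ne_of_val_ne (show i - 1 ≠ i by omega)
  have hQP : Q ≠ P := hPQ.symm
  have hPR : P ≠ R := Fin.ne_of_val_ne (show i - 1 ≠ i + 1 by omega)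
  have hRP : R ≠ P := hPR.symm
  have hQR : Q ≠ R := Fin.ne_of_val_ne (show i ≠ i + 1 by omega)
  have hRQ : R ≠ Q := hQR.symm
  have ht1 : tau n i = Equiv.swap P Q := by rw [tau, dif_pos ⟨hi1, hin⟩]
  have ht2 : tau n (i+1) = Equiv.swap Q R := by
    rw [tau, dif_pos ⟨by omega, hin1⟩]
    congr 1 <;> exact Fin.ext (show i + 1 - 1 = i by omega)
  -- aval computations
  have havP : ∀ c : Fin n → A, aval n c i = c P := fun c => by
    rw [aval, dif_pos (by omega : i - 1 < n)]
  have havQ : ∀ c : Fin n → A, aval n c (i+1) = c Q := fun c => by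
    rw [aval, dif_pos (by omega : i + 1 - 1 < n)]
    exact congrArg c (Fin.ext (show i + 1 - 1 = i by omega))
  have havR : ∀ c : Fin n → A, aval n c (i+1+1) = c R := fun c => by
    rw [aval, dif_pos (by omega : i + 1 + 1 - 1 < n)]
    exact congrArg c (Fin.ext (show i + 1 + 1 - 1 = i + 1 by omega))
  have sPQ_P : Equiv.swap P Q P = Q := Equiv.swap_apply_left P Q
  have sPQ_Q : Equiv.swap P Q Q = P := Equiv.swap_apply_right P Q
  have sPQ_R : Equiv.swap P Q R = R := Equiv.swap_apply_of_ne_of_ne hRP hRQ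
  have sQR_P : Equiv.swap Q R P = P := Equiv.swap_apply_of_ne_of_ne hPQ hPR
  have sQR_Q : Equiv.swap Q R Q = R := Equiv.swap_apply_left Q R
  have sQR_R : Equiv.swap Q R R = Q := Equiv.swap_apply_right Q R
  constructor
  · rw [twistM_eq A n _ i P Q (by simp [hPdef]; omega) rfl,
        twistM_eq A n a (i+1) Q R (by simp [hQdef]) rfl,
        permM_eq A n (i+1) Q R (by simp [hQdef]) rfl,
        permM_eq A n i P Q (by simp [hPdef]; omega) rfl]
    rw [havP, havQ, havQ, havR]
    simp only [ht1, ht2, Function.comp_apply, sPQ_P, sPQ_Q, sPQ_R, sQR_P, sQR_Q, sQR_R]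
    simp only [add_mul, mul_add, Matrix.smul_mul, Matrix.mul_smul, one_mul, mul_one,
      Matrix.single_mul_single_same, Matrix.single_mul_single_of_ne, hPQ, hQP, hPR,
      hRP, hQR, hRQ, smul_smul, mul_zero, zero_mul, smul_zero, add_zero, zero_add,
      ne_eq, not_false_eq_true]
    module
  · rw [permM_eq A n i P Q (by simp [hPdef]; omega) rfl,
        permM_eq A n (i+1) Q R (by simp [hQdef]) rfl,
        twistM_eq A n (a ∘ ⇑(tau n i)) (i+1) Q R (by simp [hQdef]) rfl,
        twistM_eq A n a i P Q (by simp [hPdef]; omega) rfl,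
        twistM_eq A n (a ∘ (⇑(tau n (i + 1)) ∘ ⇑(tau n i))) (i+1) Q R (by simp [hQdef]) rfl,
        twistM_eq A n (a ∘ ⇑(tau n (i+1))) i P Q (by simp [hPdef]; omega) rfl]
    rw [havP, havQ, havQ, havR, havQ, havR, havP, havQ]
    simp only [ht1, ht2, Function.comp_apply, sPQ_P, sPQ_Q, sPQ_R, sQR_P, sQR_Q, sQR_R]
    simp only [add_mul, mul_add, Matrix.smul_mul, Matrix.mul_smul, one_mul, mul_one,
      Matrix.single_mul_single_same, Matrix.single_mul_single_of_ne, hPQ, hQP, hPR,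
      hRP, hQR, hRQ, smul_smul, mul_zero, zero_mul, smul_zero, add_zero, zero_add,
      ne_eq, not_false_eq_true]
    module
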